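/- In the dynamic network creation game in which players' communication cost uses the temporal shortest distance, for every real atomic cost α ≥ 2 and every integer n ≥ 4, the strategy profile on players v₀, v₁, …, v_{n−1} defined by s(v₀) = ∅, s(v₁) = {(v₂, n−2), (v₀, 2n−4)}, s(v₂) = {(v₃, n−1)}, s(vᵢ) = {(v_{i+1}, n−3+i), (v₀, n−i)} for 3 ≤ i ≤ n−2, and s(v_{n−1}) = {(v₀, 1)}, whose communication temporal graph is the labelled diminished fan dF_{n−1}, has social cost at least α(2n−4) + (n−2)³/6. -/

import Mathlib

open scoped ENNReal BigOperators

/-- A temporal path from `u` to `v`, given as a list of steps `(next vertex, time label)`.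
The labelling `lab` gives, for each (ordered) pair of vertices, the set of time labels of the
edge joining them (empty if there is no edge); it is symmetric for temporal graphs arising
from strategy profiles.  The conditions say that consecutive steps use time labels belonging
to the corresponding edge, that time labels strictly increase along the path, that no vertex is
repeated, and that the path ends at `v`. -/
def IsTemporalPath {V : Type*} (lab : V → V → Set ℕ) (u v : V) (p : List (V × ℕ)) : Prop :=
  List.Chain (fun a b => b.2 ∈ lab a.1 b.1) (u, 0) p ∧
  List.Chain' (· < ·) (p.map Prod.snd) ∧
  (u :: p.map Prod.fst).Nodup ∧
  (u :: p.map Prod.fst).getLast (List.cons_ne_nil _ _) = v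

/-- The temporal shortest distance from `u` to `v`: the least number of edges of a temporal
path from `u` to `v` (`0` if `u = v`, `⊤` if there is no temporal path). -/
noncomputable def temporalDist {V : Type*} (lab : V → V → Set ℕ) (u v : V) : ℕ∞ :=
  sInf {n : ℕ∞ | ∃ p : List (V × ℕ), IsTemporalPath lab u v p ∧ (p.length : ℕ∞) = n}

/-- The labelling of the communication temporal graph `𝒢[s]` of a strategy profile `s`:
`t` is a label of the edge `uv` iff `(u, t) ∈ s v` or `(v, t) ∈ s u`. -/
def profLab {V : Type*} (s : V → Finset (V × ℕ)) : V → V → Set ℕ :=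
  fun u v => {t | (u, t) ∈ s v ∨ (v, t) ∈ s u}

/-- The (finite) set of time labels of the edge `uv` in the communication temporal graph. -/
def labelFinset {V : Type*} [DecidableEq V] (s : V → Finset (V × ℕ)) (u v : V) : Finset ℕ :=
  (((s v).filter (fun p => p.1 = u)).image Prod.snd) ∪
    (((s u).filter (fun p => p.1 = v)).image Prod.snd)

/-- The total number of time labels `∑ e ∈ E, |λ(e)|` of the communication temporal graph
(each unordered pair is counted once, whence the division by `2`). -/
def numLabels {V : Type*} [Fintype V] [DecidableEq V] (s : V → Finset (V × ℕ)) : ℕ :=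
  (∑ u : V, ∑ v : V, if u = v then 0 else (labelFinset s u v).card) / 2

/-- The number of edges `|E|` of the communication temporal graph. -/
def numEdges {V : Type*} [Fintype V] [DecidableEq V] (s : V → Finset (V × ℕ)) : ℕ :=
  ((Finset.univ : Finset (V × V)).filter
    (fun q => q.1 ≠ q.2 ∧ (labelFinset s q.1 q.2).Nonempty)).card / 2

/-- The social cost `c[s] = α·∑_{e ∈ E} |λ(e)| + ∑_{(u,v) ∈ V×V} d_{𝒢[s]}(u,v)`
of a strategy profile `s` for atomic cost `α`. -/
noncomputable def socialCost {V : Type*} [Fintype V] [DecidableEq V]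
    (α : ℝ) (s : V → Finset (V × ℕ)) : ℝ≥0∞ :=
  ENNReal.ofReal α * (numLabels s : ℝ≥0∞) +
    ∑ u : V, ∑ v : V, (temporalDist (profLab s) u v : ℝ≥0∞)

/-- The individual cost `c[s](v) = α·|s(v)| + ∑_{w ∈ V} d_{𝒢[s]}(v,w)` of player `v`. -/
noncomputable def indivCost {V : Type*} [Fintype V]
    (α : ℝ) (s : V → Finset (V × ℕ)) (v : V) : ℝ≥0∞ :=
  ENNReal.ofReal α * ((s v).card : ℝ≥0∞) +
    ∑ w : V, (temporalDist (profLab s) v w : ℝ≥0∞)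

/-- A strategy profile is a Nash equilibrium if no player can strictly decrease its individual
cost by changing only its own strategy. -/
def IsNash {V : Type*} [Fintype V] [DecidableEq V] (α : ℝ) (s : V → Finset (V × ℕ)) : Prop :=
  ∀ (v : V) (t : Finset (V × ℕ)),
    ¬ indivCost α (Function.update s v t) v < indivCost α s v

/-- The optimal social cost `c*(α, n)`: the minimum social cost over all strategy profiles
with `n` players and atomic cost `α`. -/
noncomputable def optCost (α : ℝ) (n : ℕ) : ℝ≥0∞ :=
  ⨅ s : Fin n → Finset (Fin n × ℕ), socialCost α s

/-- The price of anarchy `PoA(α, n)`: the maximum social cost of a Nash equilibrium with `n`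
players and atomic cost `α`, divided by the optimal social cost `c*(α, n)`. -/
noncomputable def PoA (α : ℝ) (n : ℕ) : ℝ≥0∞ :=
  (⨆ s : {s : Fin n → Finset (Fin n × ℕ) // IsNash α s}, socialCost α s.1) / optCost α n

/-- The price of stability `PoS(α, n)`: the minimum social cost of a Nash equilibrium with `n`
players and atomic cost `α`, divided by the optimal social cost `c*(α, n)`. -/
noncomputable def PoS (α : ℝ) (n : ℕ) : ℝ≥0∞ :=
  (⨅ s : {s : Fin n → Finset (Fin n × ℕ) // IsNash α s}, socialCost α s.1) / optCost α n

/-- The labelling of the diminished fan `dF_{n-1}` on vertices `v₀, v₁, …, v_{n-1}`: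
the path edges `vᵢ v_{i+1}` (for `1 ≤ i ≤ n-2`) carry the single time label `n-3+i`, the
edge `v₀ v₁` carries the single time label `2n-4`, and the spoke edges `v₀ vᵢ`
(for `3 ≤ i ≤ n-1`) carry the single time label `n-i`. -/
def dfLab (n : ℕ) : Fin n → Fin n → Set ℕ := fun u v =>
  {t | (∃ i : ℕ, 1 ≤ i ∧ i ≤ n - 2 ∧
          (((u : ℕ) = i ∧ (v : ℕ) = i + 1) ∨ ((v : ℕ) = i ∧ (u : ℕ) = i + 1)) ∧
          t = n - 3 + i) ∨
       ((((u : ℕ) = 0 ∧ (v : ℕ) = 1) ∨ ((v : ℕ) = 0 ∧ (u : ℕ) = 1)) ∧ t = 2 * n - 4) ∨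
       (∃ i : ℕ, 3 ≤ i ∧ i ≤ n - 1 ∧
          (((u : ℕ) = 0 ∧ (v : ℕ) = i) ∨ ((v : ℕ) = 0 ∧ (u : ℕ) = i)) ∧
          t = n - i)}

/-- The strategy profile realizing the labelled diminished fan `dF_{n-1}`:
`s(v₀) = ∅`, `s(v₁) = {(v₂, n-2), (v₀, 2n-4)}`, `s(v₂) = {(v₃, n-1)}`,
`s(vᵢ) = {(v_{i+1}, n-3+i), (v₀, n-i)}` for `3 ≤ i ≤ n-2`, and `s(v_{n-1}) = {(v₀, 1)}`. -/
def sDF (n : ℕ) (hn : 4 ≤ n) : Fin n → Finset (Fin n × ℕ) := fun u =>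
  if (u : ℕ) = 0 then ∅
  else if (u : ℕ) = 1 then {(⟨2, by omega⟩, n - 2), (⟨0, by omega⟩, 2 * n - 4)}
  else if (u : ℕ) = 2 then {(⟨3, by omega⟩, n - 1)}
  else if h : (u : ℕ) = n - 1 then {(⟨0, by omega⟩, 1)}
  else {(⟨(u : ℕ) + 1, by have := u.isLt; omega⟩, n - 3 + (u : ℕ)), (⟨0, by omega⟩, n - (u : ℕ))}


/-! ### Auxiliary lemmas -/

section Aux

/-- Linear characterization of the diminished-fan labels. -/
def LL (n a b t : ℕ) : Prop :=
  (1 ≤ a ∧ a ≤ n-2 ∧ b = a+1 ∧ t = n-3+a) ∨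
  (1 ≤ b ∧ b ≤ n-2 ∧ a = b+1 ∧ t = n-3+b) ∨
  ((a = 0 ∧ b = 1 ∨ b = 0 ∧ a = 1) ∧ t = 2*n-4) ∨
  (a = 0 ∧ 3 ≤ b ∧ b ≤ n-1 ∧ t = n-b) ∨
  (b = 0 ∧ 3 ≤ a ∧ a ≤ n-1 ∧ t = n-a)

lemma LL_symm {n a b t : ℕ} (h : LL n a b t) : LL n b a t := by
  unfold LL at *
  rcases h with h | h | ⟨h | h, ht⟩ | h | h
  · exact Or.inr (Or.inl h)
  · exact Or.inl h
  · exact Or.inr (Or.inr (Or.inl ⟨Or.inr h, ht⟩))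
  · exact Or.inr (Or.inr (Or.inl ⟨Or.inl h, ht⟩))
  · exact Or.inr (Or.inr (Or.inr (Or.inr h)))
  · exact Or.inr (Or.inr (Or.inr (Or.inl h)))

lemma dfLab_iff {n : ℕ} (u v : Fin n) (t : ℕ) :
    t ∈ dfLab n u v ↔ LL n (u:ℕ) (v:ℕ) t := by
  unfold LL
  simp only [dfLab, Set.mem_setOf_eq]
  constructor
  · rintro (⟨i, h1, h2, (⟨ha, hb⟩ | ⟨hb, ha⟩), ht⟩ | ⟨(⟨ha, hb⟩ | ⟨hb, ha⟩), ht⟩ |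
      ⟨i, h1, h2, (⟨ha, hb⟩ | ⟨hb, ha⟩), ht⟩)
    · exact Or.inl ⟨by omega, by omega, by omega, by omega⟩
    · exact Or.inr (Or.inl ⟨by omega, by omega, by omega, by omega⟩)
    · exact Or.inr (Or.inr (Or.inl ⟨Or.inl ⟨ha, hb⟩, ht⟩))
    · exact Or.inr (Or.inr (Or.inl ⟨Or.inr ⟨hb, ha⟩, ht⟩))
    · exact Or.inr (Or.inr (Or.inr (Or.inl ⟨by omega, by omega, by omega, by omega⟩)))
    · exact Or.inr (Or.inr (Or.inr (Or.inr ⟨by omega, by omega, by omega, by omega⟩)))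
  · rintro (h | h | h | h | h)
    · exact Or.inl ⟨(u:ℕ), by omega, by omega, Or.inl ⟨rfl, by omega⟩, by omega⟩
    · exact Or.inl ⟨(v:ℕ), by omega, by omega, Or.inr ⟨rfl, by omega⟩, by omega⟩
    · exact Or.inr (Or.inl ⟨by tauto, by omega⟩)
    · exact Or.inr (Or.inr ⟨(v:ℕ), by omega, by omega, Or.inl ⟨by omega, rfl⟩, by omega⟩)
    · exact Or.inr (Or.inr ⟨(u:ℕ), by omega, by omega, Or.inr ⟨by omega, rfl⟩, by omega⟩)

lemma lab_of_mem {n : ℕ} {hn : 4 ≤ n} {z w : Fin n} {t : ℕ}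
    (h : (w, t) ∈ sDF n hn z) : LL n (w:ℕ) (z:ℕ) t := by
  have hz := z.isLt; have hw := w.isLt
  unfold sDF at h
  split_ifs at h with h0 h1 h2 h3 <;>
    simp only [Finset.mem_insert, Finset.mem_singleton, Finset.notMem_empty,
      Prod.mk.injEq, Fin.ext_iff, Fin.val_mk] at h <;>
    unfold LL
  · rcases h with ⟨hw', ht⟩ | ⟨hw', ht⟩
    · exact Or.inr (Or.inl ⟨by omega, by omega, by omega, by omega⟩)
    · exact Or.inr (Or.inr (Or.inl ⟨Or.inl ⟨by omega, by omega⟩, by omega⟩))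
  · exact Or.inr (Or.inl ⟨by omega, by omega, by omega, by omega⟩)
  · exact Or.inr (Or.inr (Or.inr (Or.inl ⟨by omega, by omega, by omega, by omega⟩)))
  · rcases h with ⟨hw', ht⟩ | ⟨hw', ht⟩
    · exact Or.inr (Or.inl ⟨by omega, by omega, by omega, by omega⟩)
    · exact Or.inr (Or.inr (Or.inr (Or.inl ⟨by omega, by omega, by omega, by omega⟩)))

lemma mem_of_LL {n : ℕ} (hn : 4 ≤ n) (u v : Fin n) (t : ℕ) (h : LL n (u:ℕ) (v:ℕ) t) :
    t ∈ profLab (sDF n hn) u v := by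
  have hu := u.isLt; have hv := v.isLt
  simp only [profLab, Set.mem_setOf_eq]
  unfold LL at h
  rcases h with h | h | ⟨h | h, ht⟩ | h | h
  · right; unfold sDF; split_ifs <;> simp [Prod.ext_iff, Fin.ext_iff] <;> omega
  · left; unfold sDF; split_ifs <;> simp [Prod.ext_iff, Fin.ext_iff] <;> omega
  · left; unfold sDF; split_ifs <;> simp [Prod.ext_iff, Fin.ext_iff] <;> omega
  · right; unfold sDF; split_ifs <;> simp [Prod.ext_iff, Fin.ext_iff] <;> omega
  · left; unfold sDF; split_ifs <;> simp [Prod.ext_iff, Fin.ext_iff] <;> omega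
  · right; unfold sDF; split_ifs <;> simp [Prod.ext_iff, Fin.ext_iff] <;> omega

lemma profLab_eq (n : ℕ) (hn : 4 ≤ n) (u v : Fin n) :
    profLab (sDF n hn) u v = dfLab n u v := by
  ext t
  rw [dfLab_iff]
  constructor
  · rintro (h | h)
    · exact lab_of_mem h
    · exact LL_symm (lab_of_mem h)
  · exact mem_of_LL hn u v t

/-! ### Temporal path length lower bound -/

def Step (n : ℕ) (a b : Fin n × ℕ) : Prop := b.2 ∈ dfLab n a.1 b.1 ∧ a.2 < b.2

lemma pos_of_lab {n : ℕ} (hn : 4 ≤ n) {a b : Fin n} {t : ℕ} (h : t ∈ dfLab n a b) :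
    1 ≤ t := by
  rw [dfLab_iff] at h; unfold LL at h
  have := b.isLt
  rcases h with h | h | ⟨h | h, ht⟩ | h | h <;> omega

lemma chain_step {n : ℕ} :
    ∀ (p : List (Fin n × ℕ)) (a : Fin n × ℕ),
      List.Chain (fun x y => y.2 ∈ dfLab n x.1 y.1) a p →
      List.Chain' (· < ·) (a.2 :: p.map Prod.snd) →
      List.Chain (Step n) a p := by
  intro p
  induction p with
  | nil => intro a _ _; exact List.Chain.nil
  | cons b q ih =>
    intro a hc hinc
    unfold List.Chain at hc; rw [List.chain_cons] at hc
    simp only [List.map_cons] at hinc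
    unfold List.Chain' at hinc; rw [List.isChain_cons_cons] at hinc
    exact List.chain_cons.mpr ⟨⟨hc.1, hinc.1⟩, ih b hc.2 hinc.2⟩

def JJ (n s ℓ : ℕ) (a : Fin n × ℕ) : Prop :=
  (1 ≤ (a.1:ℕ) → (a.1:ℕ) ≤ s + ℓ) ∧ ((a.1:ℕ) = 0 → n - (s + ℓ) ≤ a.2)

lemma J_step {n s ℓ : ℕ} (hn : 4 ≤ n) (hs : 1 ≤ s) {a b : Fin n × ℕ}
    (hab : Step n a b) (hJ : JJ n s ℓ a) : JJ n s (ℓ+1) b := by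
  obtain ⟨hlab, hlt⟩ := hab
  rw [dfLab_iff] at hlab; unfold LL at hlab
  have h1 := a.1.isLt; have h2 := b.1.isLt
  obtain ⟨hk, ht⟩ := hJ
  unfold JJ
  rcases hlab with h | h | ⟨h | h, hteq⟩ | h | h <;>
    constructor <;> intro hyp <;> omega

lemma J_chain {n s : ℕ} (hn : 4 ≤ n) (hs : 1 ≤ s) :
    ∀ (p : List (Fin n × ℕ)) (a : Fin n × ℕ) (ℓ : ℕ),
      List.Chain (Step n) a p → JJ n s ℓ a →
      JJ n s (ℓ + p.length) ((a :: p).getLast (List.cons_ne_nil _ _)) := by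
  intro p
  induction p with
  | nil => intro a ℓ _ hJ; simpa using hJ
  | cons b q ih =>
    intro a ℓ hc hJ
    unfold List.Chain at hc; rw [List.chain_cons] at hc
    have h1 : JJ n s (ℓ+1) b := J_step hn hs hc.1 hJ
    have h2 := ih b (ℓ+1) hc.2 h1
    rw [List.getLast_cons (List.cons_ne_nil _ _)]
    have he : ℓ + (b :: q).length = (ℓ + 1) + q.length := by simp; omega
    rw [he]
    exact h2

lemma length_bound {n : ℕ} (hn : 4 ≤ n) {u v : Fin n} (hu : 1 ≤ (u:ℕ))
    {p : List (Fin n × ℕ)} (hp : IsTemporalPath (dfLab n) u v p) :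
    (v:ℕ) ≤ (u:ℕ) + p.length := by
  obtain ⟨hchain, hinc, hnodup, hlast⟩ := hp
  cases p with
  | nil =>
    simp only [List.map_nil, List.getLast_singleton] at hlast
    omega
  | cons b q =>
    unfold List.Chain at hchain; rw [List.chain_cons] at hchain
    have hpos : 1 ≤ b.2 := pos_of_lab hn hchain.1
    have hstep : List.Chain (Step n) (u, 0) (b :: q) := by
      apply chain_step
      · exact List.chain_cons.mpr hchain
      · simp only [List.map_cons]
        unfold List.Chain'; rw [List.isChain_cons_cons]
        exact ⟨by omega, by simpa [List.Chain'] using hinc⟩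
    have hJ0 : JJ n (u:ℕ) 0 (u, 0) := by
      refine ⟨fun _ => ?_, fun h => ?_⟩
      · show (u:ℕ) ≤ (u:ℕ) + 0; omega
      · exfalso; have hz : (u:ℕ) = 0 := h; omega
    have hJ := J_chain hn hu (b :: q) (u, 0) 0 hstep hJ0
    have hv : (((u, 0) :: b :: q).getLast (List.cons_ne_nil _ _)).1 = v := by
      have hm : ((((u, 0) :: b :: q).map Prod.fst).getLast (by simp)) =
          (((u, 0) :: b :: q).getLast (List.cons_ne_nil _ _)).1 := by
        rw [List.getLast_map]
      simp only [List.map_cons] at hm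
      rw [← hlast, ← hm]
      rfl
    obtain ⟨hk, -⟩ := hJ
    rcases Nat.eq_zero_or_pos (v : ℕ) with h0 | h1
    · omega
    · have hb := hk (by rw [hv]; omega)
      rw [hv] at hb
      simpa using hb

lemma dist_lb {n : ℕ} (hn : 4 ≤ n) (u v : Fin n) (hu : 1 ≤ (u:ℕ)) :
    (((v:ℕ) - (u:ℕ) : ℕ) : ℕ∞) ≤ temporalDist (dfLab n) u v := by
  apply le_sInf
  rintro m ⟨p, hp, rfl⟩
  have := length_bound hn hu hp
  exact Nat.cast_le.mpr (by omega)

/-! ### Counting sums -/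

lemma G_eq (m : ℕ) :
    (∑ i ∈ Finset.range m, (if 1 ≤ i then m - i else 0)) = ∑ i ∈ Finset.range m, i := by
  refine Finset.sum_nbij' (fun i => if i = 0 then 0 else m - i)
    (fun i => if i = 0 then 0 else m - i) ?_ ?_ ?_ ?_ ?_ <;>
    intro a ha <;> simp only [Finset.mem_range] at * <;> split_ifs <;> omega

lemma sixF (n : ℕ) :
    6 * (∑ i ∈ Finset.range n, ∑ j ∈ Finset.range n, (if 1 ≤ i then j - i else 0)) =
      n * (n-1) * (n-2) := by
  induction n with
  | zero => simp
  | succ m ih =>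
    have h1 : ∀ i : ℕ, ∑ j ∈ Finset.range (m+1), (if 1 ≤ i then j - i else 0) =
        (∑ j ∈ Finset.range m, (if 1 ≤ i then j - i else 0)) + (if 1 ≤ i then m - i else 0) :=
      fun i => Finset.sum_range_succ _ m
    rw [Finset.sum_range_succ]
    have h2 : ∑ j ∈ Finset.range (m+1), (if 1 ≤ m then j - m else 0) = 0 := by
      apply Finset.sum_eq_zero
      intro j hj
      simp only [Finset.mem_range] at hj
      split <;> omega
    rw [h2, add_zero]
    have h3 : (∑ i ∈ Finset.range m, ∑ j ∈ Finset.range (m+1), (if 1 ≤ i then j - i else 0)) =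
        (∑ i ∈ Finset.range m, ∑ j ∈ Finset.range m, (if 1 ≤ i then j - i else 0)) +
          ∑ i ∈ Finset.range m, (if 1 ≤ i then m - i else 0) := by
      rw [← Finset.sum_add_distrib]
      exact Finset.sum_congr rfl (fun i _ => h1 i)
    rw [h3, Nat.mul_add, ih, G_eq]
    have h4 : (∑ i ∈ Finset.range m, i) * 2 = m * (m-1) := Finset.sum_range_id_mul_two m
    have h5 : 6 * (∑ i ∈ Finset.range m, i) = 3 * (m * (m-1)) := by omega
    rw [h5]
    rcases Nat.lt_or_ge m 2 with h | h
    · interval_cases m <;> norm_num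
    · obtain ⟨k, rfl⟩ : ∃ k, m = k + 2 := ⟨m - 2, by omega⟩
      rw [show k + 2 - 1 = k + 1 from by omega, show k + 2 - 2 = k from by omega,
        show k + 2 + 1 - 1 = k + 2 from by omega, show k + 2 + 1 - 2 = k + 1 from by omega]
      ring

lemma mem_labelFinset {V : Type*} [DecidableEq V] (s : V → Finset (V × ℕ)) (u v : V) (t : ℕ) :
    t ∈ labelFinset s u v ↔ (u, t) ∈ s v ∨ (v, t) ∈ s u := by
  simp only [labelFinset, Finset.mem_union, Finset.mem_image, Finset.mem_filter]
  constructor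
  · rintro (⟨x, ⟨hx, h1⟩, h2⟩ | ⟨x, ⟨hx, h1⟩, h2⟩)
    · left; have hxe : x = (u, t) := Prod.ext h1 h2; rwa [hxe] at hx
    · right; have hxe : x = (v, t) := Prod.ext h1 h2; rwa [hxe] at hx
  · rintro (h | h)
    · exact Or.inl ⟨(u, t), ⟨h, rfl⟩, rfl⟩
    · exact Or.inr ⟨(v, t), ⟨h, rfl⟩, rfl⟩

lemma sum_pair_eq (n : ℕ) (C : ℕ → Prop) [DecidablePred C] (g : ℕ → ℕ)
    (hg : ∀ i, i < n → C i → g i < n) :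
    (∑ i ∈ Finset.range n, ∑ j ∈ Finset.range n, (if C i ∧ j = g i then 1 else 0)) =
      ((Finset.range n).filter C).card := by
  have hinner : ∀ i ∈ Finset.range n,
      (∑ j ∈ Finset.range n, (if C i ∧ j = g i then 1 else 0)) = if C i then 1 else 0 := by
    intro i hi
    simp only [Finset.mem_range] at hi
    by_cases hC : C i
    · simp only [hC, true_and, if_true]
      rw [Finset.sum_ite_eq' (Finset.range n) (g i) (fun _ => 1)]
      simp [Finset.mem_range, hg i hi hC]
    · simp [hC]
  rw [Finset.sum_congr rfl hinner, Finset.sum_boole]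
  simp

lemma sum_pair_eq2 (n : ℕ) (hn : 0 < n) (D : ℕ → Prop) [DecidablePred D] :
    (∑ i ∈ Finset.range n, ∑ j ∈ Finset.range n, (if i = 0 ∧ D j then 1 else 0)) =
      ((Finset.range n).filter D).card := by
  have hinner : ∀ i ∈ Finset.range n,
      (∑ j ∈ Finset.range n, (if i = 0 ∧ D j then 1 else 0)) =
        if i = 0 then ((Finset.range n).filter D).card else 0 := by
    intro i _
    by_cases h0 : i = 0
    · simp only [h0, true_and, if_true]
      rw [Finset.sum_boole]; simp
    · simp [h0]
  rw [Finset.sum_congr rfl hinner, Finset.sum_ite_eq' (Finset.range n) 0]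
  simp [Finset.mem_range, hn]

/-- Indicator of the six kinds of (ordered) edges of the diminished fan. -/
def EI (n a b : ℕ) : ℕ :=
  (if (1 ≤ a ∧ a ≤ n-2) ∧ b = a+1 then 1 else 0) +
  (if (1 ≤ b ∧ b ≤ n-2) ∧ a = b+1 then 1 else 0) +
  (if a = 0 ∧ b = 1 then 1 else 0) +
  (if b = 0 ∧ a = 1 then 1 else 0) +
  (if a = 0 ∧ (3 ≤ b ∧ b ≤ n-1) then 1 else 0) +
  (if b = 0 ∧ (3 ≤ a ∧ a ≤ n-1) then 1 else 0)

lemma EI_le_one (n a b : ℕ) : EI n a b ≤ 1 := by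
  unfold EI; split_ifs <;> omega

lemma EI_le (n : ℕ) (hn : 4 ≤ n) (u v : Fin n) :
    EI n (u:ℕ) (v:ℕ) ≤ if u = v then 0 else (labelFinset (sDF n hn) u v).card := by
  have hu := u.isLt; have hv := v.isLt
  by_cases hE : ((1 ≤ (u:ℕ) ∧ (u:ℕ) ≤ n-2) ∧ (v:ℕ) = (u:ℕ)+1) ∨
      ((1 ≤ (v:ℕ) ∧ (v:ℕ) ≤ n-2) ∧ (u:ℕ) = (v:ℕ)+1) ∨
      ((u:ℕ) = 0 ∧ (v:ℕ) = 1) ∨ ((v:ℕ) = 0 ∧ (u:ℕ) = 1) ∨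
      ((u:ℕ) = 0 ∧ (3 ≤ (v:ℕ) ∧ (v:ℕ) ≤ n-1)) ∨
      ((v:ℕ) = 0 ∧ (3 ≤ (u:ℕ) ∧ (u:ℕ) ≤ n-1))
  · have hne : u ≠ v := by
      intro huv
      rw [huv] at hE
      rcases hE with h | h | h | h | h | h <;> omega
    rw [if_neg hne]
    have hone := EI_le_one n (u:ℕ) (v:ℕ)
    have hcard : 0 < (labelFinset (sDF n hn) u v).card := by
      apply Finset.card_pos.mpr
      rcases hE with h | h | h | h | h | h
      · exact ⟨n-3+(u:ℕ), (mem_labelFinset _ u v _).mpr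
          (mem_of_LL hn u v _ (Or.inl ⟨h.1.1, h.1.2, h.2, rfl⟩))⟩
      · exact ⟨n-3+(v:ℕ), (mem_labelFinset _ u v _).mpr
          (mem_of_LL hn u v _ (Or.inr (Or.inl ⟨h.1.1, h.1.2, h.2, rfl⟩)))⟩
      · exact ⟨2*n-4, (mem_labelFinset _ u v _).mpr
          (mem_of_LL hn u v _ (Or.inr (Or.inr (Or.inl ⟨Or.inl h, rfl⟩))))⟩
      · exact ⟨2*n-4, (mem_labelFinset _ u v _).mpr
          (mem_of_LL hn u v _ (Or.inr (Or.inr (Or.inl ⟨Or.inr h, rfl⟩))))⟩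
      · exact ⟨n-(v:ℕ), (mem_labelFinset _ u v _).mpr
          (mem_of_LL hn u v _ (Or.inr (Or.inr (Or.inr (Or.inl ⟨h.1, h.2.1, h.2.2, rfl⟩)))))⟩
      · exact ⟨n-(u:ℕ), (mem_labelFinset _ u v _).mpr
          (mem_of_LL hn u v _ (Or.inr (Or.inr (Or.inr (Or.inr ⟨h.1, h.2.1, h.2.2, rfl⟩)))))⟩
    omega
  · have hz : EI n (u:ℕ) (v:ℕ) = 0 := by
      unfold EI; split_ifs <;> omega
    rw [hz]
    exact Nat.zero_le _

lemma EI_sum (n : ℕ) (hn : 4 ≤ n) :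
    (∑ i ∈ Finset.range n, ∑ j ∈ Finset.range n, EI n i j) = 4*n - 8 := by
  have e1 : (∑ i ∈ Finset.range n, ∑ j ∈ Finset.range n,
      (if (1 ≤ i ∧ i ≤ n-2) ∧ j = i+1 then 1 else 0)) = n - 2 := by
    rw [sum_pair_eq n (fun i => 1 ≤ i ∧ i ≤ n-2) (fun i => i+1) (fun i hi hC => show i+1 < n by omega)]
    have : (Finset.range n).filter (fun i => 1 ≤ i ∧ i ≤ n-2) = Finset.Icc 1 (n-2) := by
      ext i; simp [Finset.mem_range]; omega
    rw [this, Nat.card_Icc]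
    omega
  have e3 : (∑ i ∈ Finset.range n, ∑ j ∈ Finset.range n,
      (if i = 0 ∧ j = 1 then 1 else 0)) = 1 := by
    rw [sum_pair_eq n (fun i => i = 0) (fun _ => 1) (fun i hi _ => show 1 < n by omega)]
    have : (Finset.range n).filter (fun i => i = 0) = {0} := by
      ext i
      simp only [Finset.mem_filter, Finset.mem_range, Finset.mem_singleton]
      omega
    rw [this, Finset.card_singleton]
  have e5 : (∑ i ∈ Finset.range n, ∑ j ∈ Finset.range n,
      (if i = 0 ∧ (3 ≤ j ∧ j ≤ n-1) then 1 else 0)) = n - 3 := by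
    rw [sum_pair_eq2 n (by omega) (fun j => 3 ≤ j ∧ j ≤ n-1)]
    have : (Finset.range n).filter (fun j => 3 ≤ j ∧ j ≤ n-1) = Finset.Icc 3 (n-1) := by
      ext i; simp [Finset.mem_range]; omega
    rw [this, Nat.card_Icc]
    omega
  have e2 : (∑ i ∈ Finset.range n, ∑ j ∈ Finset.range n,
      (if (1 ≤ j ∧ j ≤ n-2) ∧ i = j+1 then 1 else 0)) = n - 2 := by
    rw [Finset.sum_comm]; exact e1
  have e4 : (∑ i ∈ Finset.range n, ∑ j ∈ Finset.range n,
      (if j = 0 ∧ i = 1 then 1 else 0)) = 1 := by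
    rw [Finset.sum_comm]; exact e3
  have e6 : (∑ i ∈ Finset.range n, ∑ j ∈ Finset.range n,
      (if j = 0 ∧ (3 ≤ i ∧ i ≤ n-1) then 1 else 0)) = n - 3 := by
    rw [Finset.sum_comm]; exact e5
  unfold EI
  simp only [Finset.sum_add_distrib]
  rw [e1, e2, e3, e4, e5, e6]
  omega

lemma numLabels_lb (n : ℕ) (hn : 4 ≤ n) : 2 * n - 4 ≤ numLabels (sDF n hn) := by
  have key : 4*n - 8 ≤
      ∑ u : Fin n, ∑ v : Fin n, (if u = v then 0 else (labelFinset (sDF n hn) u v).card) := by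
    have h1 : (∑ i ∈ Finset.range n, ∑ j ∈ Finset.range n, EI n i j) =
        ∑ u : Fin n, ∑ v : Fin n, EI n (u:ℕ) (v:ℕ) := by
      rw [← Fin.sum_univ_eq_sum_range (fun i => ∑ j ∈ Finset.range n, EI n i j) n]
      exact Finset.sum_congr rfl
        (fun u _ => (Fin.sum_univ_eq_sum_range (fun j => EI n (u:ℕ) j) n).symm)
    calc 4*n - 8 = ∑ i ∈ Finset.range n, ∑ j ∈ Finset.range n, EI n i j := (EI_sum n hn).symm
    _ = ∑ u : Fin n, ∑ v : Fin n, EI n (u:ℕ) (v:ℕ) := h1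
    _ ≤ _ := Finset.sum_le_sum (fun u _ => Finset.sum_le_sum (fun v _ => EI_le n hn u v))
  unfold numLabels
  rw [Nat.le_div_iff_mul_le (by norm_num : 0 < 2)]
  omega

end Aux

/-- For every atomic cost `α ≥ 2` and every integer `n ≥ 4`, the strategy profile `sDF n`,
whose communication temporal graph is the labelled diminished fan `dF_{n-1}`, has social
cost at least `α(2n-4) + (n-2)³/6`. -/
theorem statement_18 (α : ℝ) (hα : 2 ≤ α) (n : ℕ) (hn : 4 ≤ n) :
    (∀ u v : Fin n, profLab (sDF n hn) u v = dfLab n u v) ∧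
      ENNReal.ofReal (α * (2 * (n : ℝ) - 4) + ((n : ℝ) - 2) ^ 3 / 6) ≤
        socialCost α (sDF n hn) := by
  have hα0 : (0:ℝ) ≤ α := by linarith
  have h4r : (4:ℝ) ≤ (n:ℝ) := by exact_mod_cast hn
  refine ⟨profLab_eq n hn, ?_⟩
  have hlab : profLab (sDF n hn) = dfLab n :=
    funext fun u => funext fun v => profLab_eq n hn u v
  unfold socialCost
  have hA : ENNReal.ofReal (α * (2*(n:ℝ) - 4)) ≤
      ENNReal.ofReal α * (numLabels (sDF n hn) : ℝ≥0∞) := by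
    rw [ENNReal.ofReal_mul hα0]
    refine mul_le_mul_right ?_ _
    have h24 : (2*(n:ℝ) - 4) = ((2*n - 4 : ℕ) : ℝ) := by
      rw [Nat.cast_sub (by omega : 4 ≤ 2*n)]
      push_cast; ring
    rw [h24, ENNReal.ofReal_natCast]
    exact_mod_cast numLabels_lb n hn
  have hB : ENNReal.ofReal (((n:ℝ)-2)^3/6) ≤
      ∑ u : Fin n, ∑ v : Fin n, ((temporalDist (profLab (sDF n hn)) u v : ℕ∞) : ℝ≥0∞) := by
    rw [hlab]
    set F : ℕ := ∑ i ∈ Finset.range n, ∑ j ∈ Finset.range n, (if 1 ≤ i then j - i else 0)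
      with hFdef
    have h6 : 6 * F = n*(n-1)*(n-2) := sixF n
    have c1 : ((n-1:ℕ):ℝ) = (n:ℝ) - 1 := by
      rw [Nat.cast_sub (by omega : 1 ≤ n)]; norm_num
    have c2 : ((n-2:ℕ):ℝ) = (n:ℝ) - 2 := by
      rw [Nat.cast_sub (by omega : 2 ≤ n)]; norm_num
    have hc : 6*(F:ℝ) = (n:ℝ)*((n:ℝ)-1)*((n:ℝ)-2) := by
      have hcast := congrArg (Nat.cast : ℕ → ℝ) h6
      push_cast at hcast
      rw [c1, c2] at hcast
      exact_mod_cast hcast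
    have key1 : ((n:ℝ)-2)^2 ≤ (n:ℝ)*((n:ℝ)-1) := by nlinarith
    have key2 : (0:ℝ) ≤ (n:ℝ)-2 := by linarith
    have h1 : ((n:ℝ)-2)^3 ≤ 6*(F:ℝ) := by
      rw [hc]
      nlinarith [mul_le_mul_of_nonneg_right key1 key2]
    have hr : ((n:ℝ)-2)^3/6 ≤ (F:ℝ) := by linarith
    have hF : ENNReal.ofReal (((n:ℝ)-2)^3/6) ≤ (F : ℝ≥0∞) := by
      calc ENNReal.ofReal (((n:ℝ)-2)^3/6) ≤ ENNReal.ofReal (F:ℝ) :=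
            ENNReal.ofReal_le_ofReal hr
      _ = (F:ℝ≥0∞) := ENNReal.ofReal_natCast F
    refine le_trans hF ?_
    have hFfin : F = ∑ u : Fin n, ∑ v : Fin n,
        (if 1 ≤ (u:ℕ) then (v:ℕ) - (u:ℕ) else 0) := by
      rw [hFdef,
        ← Fin.sum_univ_eq_sum_range (fun i => ∑ j ∈ Finset.range n,
          (if 1 ≤ i then j - i else 0)) n]
      exact Finset.sum_congr rfl (fun u _ =>
        (Fin.sum_univ_eq_sum_range (fun j => if 1 ≤ (u:ℕ) then j - (u:ℕ) else 0) n).symm)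
    have hFcast : (F : ℝ≥0∞) = ∑ u : Fin n, ∑ v : Fin n,
        (((if 1 ≤ (u:ℕ) then (v:ℕ) - (u:ℕ) else 0) : ℕ) : ℝ≥0∞) := by
      rw [hFfin]
      push_cast
      rfl
    rw [hFcast]
    refine Finset.sum_le_sum (fun u _ => Finset.sum_le_sum (fun v _ => ?_))
    by_cases hu : 1 ≤ (u:ℕ)
    · rw [if_pos hu]
      refine le_trans (le_of_eq (ENat.toENNReal_coe _).symm)
        (ENat.toENNReal_le.mpr (dist_lb hn u v hu))
    · rw [if_neg hu]
      simp
  calc ENNReal.ofReal (α * (2 * (n:ℝ) - 4) + ((n:ℝ) - 2) ^ 3 / 6) ≤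
      ENNReal.ofReal (α * (2*(n:ℝ) - 4)) + ENNReal.ofReal (((n:ℝ)-2)^3/6) :=
        ENNReal.ofReal_add_le
  _ ≤ _ := add_le_add hA hB
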